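/- (Main theorem) Suppose the boundary condition E_{(z,c)∼ν_{t_0}}[d(f_{θ,φ}(z,c), f_θ(z))] = 0 holds, where ν_{t_0} has density γ(z)·p(c|f_θ(z)), and suppose the consistency condition Σ_{k=0}^{N-1} MMD²((T_φ)_#ν_{t_{k+1}}, (T_φ)_#ν_{t_k}) = 0 holds with a characteristic kernel, where ν_{t_N} = ρ is the independent coupling with density γ(z)·p(c). Then (T_φ)_#ρ = η, i.e. if z ∼ N(0,I_m) and independently c ∼ p(c), then (f_{θ,φ}(z,c), c) is distributed with density p_θ(x)·p(c|x). -/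

import Mathlib

open MeasureTheory Real ENNReal Finset

namespace Stmt7Aux

variable {α β C' : Type*} [MeasurableSpace α] [MeasurableSpace β] [MeasurableSpace C']

/-- Pushing forward a `withDensity` along the map whose density is pulled back. -/
lemma map_withDensity (μ : Measure α) {f : α → β} (hf : Measurable f)
    {g : β → ℝ≥0∞} (hg : Measurable g) :
    (μ.withDensity fun a => g (f a)).map f = (μ.map f).withDensity g := by
  ext s hs
  rw [Measure.map_apply hf hs, withDensity_apply _ (hf hs), withDensity_apply _ hs,
    setLIntegral_map hs hg hf]

/-- A density on the first factor commutes with `bind` against the kernel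
`z ↦ (Prod.mk z)_* μC`. -/
lemma bind_withDensity (μ : Measure α) (μC : Measure C')
    (hF : Measurable fun z : α => μC.map (Prod.mk z))
    {g : α → ℝ≥0∞} (hg : Measurable g) :
    (μ.bind fun z => μC.map (Prod.mk z)).withDensity (fun p => g p.1)
      = (μ.withDensity g).bind fun z => μC.map (Prod.mk z) := by
  ext s hs
  have hind : Measurable (s.indicator fun p : α × C' => g p.1) :=
    (hg.comp measurable_fst).indicator hs
  rw [withDensity_apply _ hs, Measure.bind_apply hs hF.aemeasurable,
    ← lintegral_indicator hs, Measure.lintegral_bind hF.aemeasurable hind.aemeasurable,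
    lintegral_withDensity_eq_lintegral_mul _ hg
      (show Measurable fun z : α => (μC.map (Prod.mk z)) s from
        (Measure.measurable_coe hs).comp hF)]
  simp only [Pi.mul_apply]
  refine lintegral_congr fun z => ?_
  have hpre : MeasurableSet (Prod.mk z ⁻¹' s) := measurable_prodMk_left hs
  rw [lintegral_map hind measurable_prodMk_left]
  have heq : ∀ c : C', s.indicator (fun p : α × C' => g p.1) (z, c)
      = g z * (Prod.mk z ⁻¹' s).indicator 1 c := by
    intro c
    by_cases h : (z, c) ∈ s
    · rw [Set.indicator_of_mem h, Set.indicator_of_mem (show c ∈ Prod.mk z ⁻¹' s from h)]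
      simp
    · rw [Set.indicator_of_notMem h,
        Set.indicator_of_notMem (show c ∉ Prod.mk z ⁻¹' s from h), mul_zero]
  simp_rw [heq]
  rw [lintegral_const_mul _ (measurable_one.indicator hpre), lintegral_indicator_one hpre,
    Measure.map_apply measurable_prodMk_left hs]

/-- Mapping the first factor commutes with `bind` against the kernels
`z ↦ (Prod.mk z)_* μC`. -/
lemma bind_map (μ : Measure α) (μC : Measure C') {f : α → β} (hf : Measurable f)
    (hFα : Measurable fun z : α => μC.map (Prod.mk z))
    (hFβ : Measurable fun x : β => μC.map (Prod.mk x)) :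
    (μ.bind fun z => μC.map (Prod.mk z)).map (fun zc : α × C' => (f zc.1, zc.2))
      = (μ.map f).bind fun x => μC.map (Prod.mk x) := by
  have hfm : Measurable fun zc : α × C' => (f zc.1, zc.2) :=
    (hf.comp measurable_fst).prodMk measurable_snd
  ext s hs
  rw [Measure.map_apply hfm hs, Measure.bind_apply (hfm hs) hFα.aemeasurable, Measure.bind_apply hs hFβ.aemeasurable,
    lintegral_map (show Measurable fun x : β => (μC.map (Prod.mk x)) s from
      (Measure.measurable_coe hs).comp hFβ) hf]
  refine lintegral_congr fun z => ?_
  rw [Measure.map_apply measurable_prodMk_left (hfm hs),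
    Measure.map_apply measurable_prodMk_left hs]
  congr 1

/-- Key measurability upgrade: if `z ↦ (Prod.mk z)_* μC` is a.e. measurable w.r.t. a measure
on a standard Borel space all of whose conull sets are uncountable, then the analogous map
is (genuinely) measurable from any uncountable standard Borel space. -/
lemma measurable_mapProdMk [StandardBorelSpace α] [StandardBorelSpace β]
    (hβ : ¬ Countable β) (μ : Measure α) (μC : Measure C')
    (hAE : AEMeasurable (fun z : α => μC.map (Prod.mk z)) μ)
    (hμ : ∀ s : Set α, MeasurableSet s → μ sᶜ = 0 → ¬ s.Countable) :
    Measurable fun x : β => μC.map (Prod.mk x) := by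
  classical
  haveI : Nonempty β := by
    rcases isEmpty_or_nonempty β with h | h
    · haveI := h; exact absurd (inferInstance : Countable β) hβ
    · exact h
  obtain ⟨G, hG, hFG⟩ := hAE
  set W : Set α := (toMeasurable μ {z | (fun z : α => μC.map (Prod.mk z)) z ≠ G z})ᶜ with hWdef
  have hWmeas : MeasurableSet W := (measurableSet_toMeasurable _ _).compl
  have hWnull : μ Wᶜ = 0 := by
    rw [hWdef, compl_compl, measure_toMeasurable]
    exact hFG
  have hWeq : ∀ z ∈ W, μC.map (Prod.mk z) = G z := by
    intro z hz
    by_contra h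
    exact hz (subset_toMeasurable μ _ h)
  have hWc : ¬ Countable W := by
    intro h
    exact hμ W hWmeas hWnull (Set.countable_coe_iff.mp h)
  haveI : StandardBorelSpace W := hWmeas.standardBorel
  let e : β ≃ᵐ W := PolishSpace.measurableEquivOfNotCountable hβ hWc
  let j : α → β := fun z => if h : z ∈ W then e.symm ⟨z, h⟩ else Classical.arbitrary β
  have hj : Measurable j := Measurable.dite e.symm.measurable measurable_const hWmeas
  have hjm : Measurable fun zc : α × C' => (j zc.1, zc.2) :=
    (hj.comp measurable_fst).prodMk measurable_snd
  have hkey : (fun x : β => μC.map (Prod.mk x))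
      = fun x : β => (G ((e x : α))).map (fun zc : α × C' => (j zc.1, zc.2)) := by
    funext x
    have hx : ((e x : α)) ∈ W := (e x).2
    rw [← hWeq _ hx, Measure.map_map hjm measurable_prodMk_left]
    have hcomp : ((fun zc : α × C' => (j zc.1, zc.2)) ∘ Prod.mk ((e x : α))) = Prod.mk x := by
      funext c
      have hjx : j ((e x : α)) = x := by
        simp only [j]
        rw [dif_pos hx, Subtype.coe_eta, e.symm_apply_apply]
      simp [Function.comp, hjx]
    rw [hcomp]
  rw [hkey]
  exact (Measure.measurable_map _ hjm).comp
    (hG.comp (measurable_subtype_coe.comp e.measurable))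

end Stmt7Aux


set_option maxHeartbeats 1000000 in
/-- Main theorem: boundary condition + consistency condition imply
that T_φ maps the independent coupling ρ = γ(z)·p(c) to the target joint
distribution with density p_θ(x)·p(c|x). -/
theorem stmt_7 {m n : ℕ} {C : Type*} [MeasurableSpace C] (μC : Measure C)
    (γ : EuclideanSpace ℝ (Fin m) → ℝ≥0∞)
    (pθ : EuclideanSpace ℝ (Fin n) → ℝ≥0∞)
    (fθ : EuclideanSpace ℝ (Fin m) → EuclideanSpace ℝ (Fin n))
    (fθφ : EuclideanSpace ℝ (Fin m) × C → EuclideanSpace ℝ (Fin n))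
    (pc : EuclideanSpace ℝ (Fin n) → C → ℝ≥0∞) (pC : C → ℝ≥0∞)
    (hfθ : Measurable fθ) (hfθφ : Measurable fθφ) (hγ : Measurable γ) (hpθ : Measurable pθ)
    (hpc : Measurable fun q : EuclideanSpace ℝ (Fin n) × C => pc q.1 q.2)
    (hγgauss : ∀ z, γ z =
      ENNReal.ofReal ((2 * π) ^ (-(m : ℝ) / 2) * Real.exp (-‖z‖ ^ 2 / 2)))
    (hP : (volume.withDensity γ).map fθ = volume.withDensity pθ)
    (hpc1 : ∀ x, ∫⁻ c, pc x c ∂μC = 1)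
    (hpC : ∀ c, pC c = ∫⁻ z, γ z * pc (fθ z) c)
    -- interpolating sequence of latent-condition distributions
    (N : ℕ) (ν : ℕ → Measure (EuclideanSpace ℝ (Fin m) × C))
    (hνprob : ∀ k ≤ N, IsProbabilityMeasure (ν k))
    (hν0 : ν 0 = (volume.prod μC).withDensity (fun zc => γ zc.1 * pc (fθ zc.1) zc.2))
    (hνN : ν N = (volume.prod μC).withDensity (fun zc => γ zc.1 * pC zc.2))
    -- squared MMD with a characteristic kernel
    (MMD2 : Measure (EuclideanSpace ℝ (Fin n) × C) →
      Measure (EuclideanSpace ℝ (Fin n) × C) → ℝ)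
    (hMMD_nonneg : ∀ P Q, IsProbabilityMeasure P → IsProbabilityMeasure Q → 0 ≤ MMD2 P Q)
    (hMMD_char : ∀ P Q, IsProbabilityMeasure P → IsProbabilityMeasure Q →
      (MMD2 P Q = 0 ↔ P = Q))
    -- 1. Boundary condition
    (hbound : ∫⁻ zc, ENNReal.ofReal (dist (fθφ zc) (fθ zc.1)) ∂(ν 0) = 0)
    -- 2. Consistency condition
    (hcons : ∑ k ∈ Finset.range N,
        MMD2 ((ν (k + 1)).map (fun zc => (fθφ zc, zc.2)))
             ((ν k).map (fun zc => (fθφ zc, zc.2))) = 0) :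
    (ν N).map (fun zc => (fθφ zc, zc.2)) =
      (volume.prod μC).withDensity (fun xc => pθ xc.1 * pc xc.1 xc.2) := by
  classical
  have hS : Measurable fun zc : EuclideanSpace ℝ (Fin m) × C => (fθφ zc, zc.2) :=
    hfθφ.prodMk measurable_snd
  have hT : Measurable fun zc : EuclideanSpace ℝ (Fin m) × C => (fθ zc.1, zc.2) :=
    (hfθ.comp measurable_fst).prodMk measurable_snd
  have hν0p : IsProbabilityMeasure (ν 0) := hνprob 0 (Nat.zero_le N)
  -- the kernel on the m-side is a.e. measurable (otherwise ν 0 would be the zero measure)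
  have hAEm : AEMeasurable (fun z : EuclideanSpace ℝ (Fin m) => μC.map (Prod.mk z)) volume := by
    by_contra hn
    have h0 : (volume : Measure (EuclideanSpace ℝ (Fin m))).prod μC = 0 := by
      rw [Measure.prod_def]
      show Measure.join (Measure.map _ volume) = 0
      rw [Measure.map_of_not_aemeasurable hn, Measure.join_zero]
    have hν00 : ν 0 = 0 := by
      rw [hν0, h0]
      ext s hs
      rw [withDensity_apply _ hs]
      simp
    have h1 := hν0p.measure_univ
    rw [hν00] at h1
    simp at h1
  -- the volume on the m-side is nonzero
  have hvolm : (volume : Measure (EuclideanSpace ℝ (Fin m))) ≠ 0 := by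
    intro h0
    have hprod0 : (volume : Measure (EuclideanSpace ℝ (Fin m))).prod μC = 0 := by
      rw [Measure.prod_def, h0, Measure.bind_zero_left]
    have hν00 : ν 0 = 0 := by
      rw [hν0, hprod0]
      ext s hs
      rw [withDensity_apply _ hs]
      simp
    have h1 := hν0p.measure_univ
    rw [hν00] at h1
    simp at h1
  -- uncountability of nontrivial euclidean spaces
  have huncount : ∀ k : ℕ, k ≠ 0 → ¬ Countable (EuclideanSpace ℝ (Fin k)) := by
    intro k hk
    haveI : Nonempty (Fin k) := ⟨⟨0, Nat.pos_of_ne_zero hk⟩⟩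
    have hinj : Function.Injective (fun r : ℝ => (WithLp.toLp 2 (fun _ => r) : EuclideanSpace ℝ (Fin k))) :=
      fun a b h => by simpa using congrArg (fun v : EuclideanSpace ℝ (Fin k) => v (Classical.arbitrary (Fin k))) h
    haveI : Uncountable (EuclideanSpace ℝ (Fin k)) := hinj.uncountable
    exact not_countable
  -- nontriviality and atomlessness
  have hnontriv : ∀ k : ℕ, k ≠ 0 → Nontrivial (EuclideanSpace ℝ (Fin k)) := by
    intro k hk
    refine ⟨⟨EuclideanSpace.single ⟨0, Nat.pos_of_ne_zero hk⟩ (1 : ℝ), 0, fun h => ?_⟩⟩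
    have := congrArg (fun v : EuclideanSpace ℝ (Fin k) => v ⟨0, Nat.pos_of_ne_zero hk⟩) h
    simp [EuclideanSpace.single_apply] at this
  -- conull sets on the m-side are uncountable (when m ≠ 0)
  have hconull : m ≠ 0 → ∀ s : Set (EuclideanSpace ℝ (Fin m)),
      MeasurableSet s → volume sᶜ = 0 → ¬ s.Countable := by
    intro hm s _ h0 hc
    haveI := hnontriv m hm
    haveI : NullSingletonClass (volume : Measure (EuclideanSpace ℝ (Fin m))) := inferInstance
    have hs0 : volume s = 0 := hc.measure_zero _
    have huniv : (volume : Measure (EuclideanSpace ℝ (Fin m))) Set.univ = 0 := by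
      have hle := measure_union_le (μ := (volume : Measure (EuclideanSpace ℝ (Fin m)))) s sᶜ
      rw [Set.union_compl_self, hs0, h0] at hle
      simpa using hle
    exact hvolm (Measure.measure_univ_eq_zero.mp huniv)
  -- the kernels are measurable
  have hFm : Measurable fun z : EuclideanSpace ℝ (Fin m) => μC.map (Prod.mk z) := by
    rcases eq_or_ne m 0 with hm | hm
    · subst hm
      haveI : Subsingleton (EuclideanSpace ℝ (Fin 0)) :=
        ⟨fun a b => by ext i; exact i.elim0⟩
      exact Subsingleton.measurable
    · exact Stmt7Aux.measurable_mapProdMk (huncount m hm) volume μC hAEm (hconull hm)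
  have hFn : Measurable fun x : EuclideanSpace ℝ (Fin n) => μC.map (Prod.mk x) := by
    rcases eq_or_ne n 0 with hn | hn
    · subst hn
      haveI : Subsingleton (EuclideanSpace ℝ (Fin 0)) :=
        ⟨fun a b => by ext i; exact i.elim0⟩
      exact Subsingleton.measurable
    · rcases eq_or_ne m 0 with hm | hm
      · -- impossible: hP would push a point mass to an atomless measure
        exfalso
        subst hm
        haveI : Subsingleton (EuclideanSpace ℝ (Fin 0)) :=
          ⟨fun a b => by ext i; exact i.elim0⟩
        haveI := hnontriv n hn
        haveI : NullSingletonClass (volume : Measure (EuclideanSpace ℝ (Fin n))) := inferInstance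
        have hγ1 : γ = 1 := by
          funext z
          rw [hγgauss]
          have hz : ‖z‖ = 0 := by
            rw [Subsingleton.elim z (0 : EuclideanSpace ℝ (Fin 0))]
            exact norm_zero
          rw [hz]
          simp [Pi.one_apply]
        have hμγ : volume.withDensity γ = (volume : Measure (EuclideanSpace ℝ (Fin 0))) := by
          rw [hγ1, withDensity_one]
        set x₀ : EuclideanSpace ℝ (Fin n) := fθ 0 with hx₀
        have hLHS : ((volume.withDensity γ).map fθ) {x₀} = 1 := by
          rw [hμγ, Measure.map_apply hfθ (measurableSet_singleton x₀)]
          have hpre : fθ ⁻¹' {x₀} = Set.univ := by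
            ext z
            simp [Subsingleton.elim z (0 : EuclideanSpace ℝ (Fin 0)), hx₀]
          rw [hpre, volume_euclideanSpace_eq_dirac]
          simp
        have hRHS : (volume.withDensity pθ) {x₀} = 0 := by
          rw [withDensity_apply _ (measurableSet_singleton x₀)]
          exact setLIntegral_measure_zero _ _ (measure_singleton x₀)
        rw [hP, hRHS] at hLHS
        exact one_ne_zero hLHS.symm
      · exact Stmt7Aux.measurable_mapProdMk (huncount n hn) volume μC hAEm (hconull hm)
  -- Step A: probability of the mapped measures
  have hprob : ∀ k, k ≤ N → IsProbabilityMeasure ((ν k).map (fun zc => (fθφ zc, zc.2))) := by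
    intro k hk
    haveI := hνprob k hk
    exact Measure.isProbabilityMeasure_map hS.aemeasurable
  have hterm : ∀ k ∈ Finset.range N,
      MMD2 ((ν (k + 1)).map (fun zc => (fθφ zc, zc.2)))
        ((ν k).map (fun zc => (fθφ zc, zc.2))) = 0 := by
    rw [← Finset.sum_eq_zero_iff_of_nonneg]
    · exact hcons
    · intro k hk
      have hkN : k < N := Finset.mem_range.mp hk
      exact hMMD_nonneg _ _ (hprob (k + 1) hkN) (hprob k hkN.le)
  have hchain : ∀ k, k ≤ N → (ν k).map (fun zc => (fθφ zc, zc.2))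
      = (ν 0).map (fun zc => (fθφ zc, zc.2)) := by
    intro k
    induction k with
    | zero => intro _; rfl
    | succ k ih =>
      intro hk
      have hk' : k ≤ N := Nat.le_of_succ_le hk
      have hkN : k < N := hk
      have h0 := hterm k (Finset.mem_range.mpr hkN)
      rw [(hMMD_char _ _ (hprob (k + 1) hk) (hprob k hk')).mp h0, ih hk']
  -- Step B: boundary condition identifies the two maps ν0-a.e.
  have hae : (fun zc : EuclideanSpace ℝ (Fin m) × C => (fθφ zc, zc.2))
      =ᵐ[ν 0] fun zc => (fθ zc.1, zc.2) := by
    have hdist : Measurable fun zc : EuclideanSpace ℝ (Fin m) × C =>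
        ENNReal.ofReal (dist (fθφ zc) (fθ zc.1)) :=
      (hfθφ.dist (hfθ.comp measurable_fst)).ennreal_ofReal
    have h0 := (lintegral_eq_zero_iff hdist).mp hbound
    filter_upwards [h0] with zc hzc
    have hle : dist (fθφ zc) (fθ zc.1) ≤ 0 := by
      simpa [ENNReal.ofReal_eq_zero] using hzc
    have heq : fθφ zc = fθ zc.1 := dist_le_zero.mp hle
    rw [heq]
  have hB : (ν 0).map (fun zc => (fθφ zc, zc.2))
      = (ν 0).map (fun zc => (fθ zc.1, zc.2)) := Measure.map_congr hae
  -- Step C: compute the pushforward of ν 0 under (fθ, id)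
  have hprodm : (volume : Measure (EuclideanSpace ℝ (Fin m))).prod μC
      = volume.bind fun z => μC.map (Prod.mk z) := Measure.prod_def _ _
  have hprodn : (volume : Measure (EuclideanSpace ℝ (Fin n))).prod μC
      = volume.bind fun x => μC.map (Prod.mk x) := Measure.prod_def _ _
  have hpcT : Measurable fun zc : EuclideanSpace ℝ (Fin m) × C => pc (fθ zc.1) zc.2 :=
    hpc.comp hT
  have s1 : ((volume.bind fun z => μC.map (Prod.mk z)).withDensity
        fun zc => γ zc.1 * pc (fθ zc.1) zc.2)
      = (((volume.withDensity γ).bind fun z => μC.map (Prod.mk z)).withDensity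
        fun zc => pc (fθ zc.1) zc.2) := by
    have hsplit : (fun zc : EuclideanSpace ℝ (Fin m) × C => γ zc.1 * pc (fθ zc.1) zc.2)
        = ((fun zc : EuclideanSpace ℝ (Fin m) × C => γ zc.1)
          * fun zc => pc (fθ zc.1) zc.2) := rfl
    rw [hsplit, withDensity_mul _ (show Measurable fun zc : EuclideanSpace ℝ (Fin m) × C => γ zc.1 from hγ.comp measurable_fst) hpcT,
      Stmt7Aux.bind_withDensity volume μC hFm hγ]
  have s2 : ((((volume.withDensity γ).bind fun z => μC.map (Prod.mk z)).withDensity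
        fun zc => pc (fθ zc.1) zc.2).map fun zc => (fθ zc.1, zc.2))
      = ((((volume.withDensity γ).bind fun z => μC.map (Prod.mk z)).map
          fun zc => (fθ zc.1, zc.2)).withDensity fun xc => pc xc.1 xc.2) :=
    Stmt7Aux.map_withDensity _ hT hpc
  have s3 : (((volume.withDensity γ).bind fun z => μC.map (Prod.mk z)).map
        fun zc => (fθ zc.1, zc.2))
      = (volume.withDensity pθ).bind fun x => μC.map (Prod.mk x) := by
    rw [Stmt7Aux.bind_map (volume.withDensity γ) μC hfθ hFm hFn, hP]
  have s4 : (((volume.withDensity pθ).bind fun x => μC.map (Prod.mk x)).withDensity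
        fun xc => pc xc.1 xc.2)
      = (volume.prod μC).withDensity fun xc => pθ xc.1 * pc xc.1 xc.2 := by
    rw [← Stmt7Aux.bind_withDensity volume μC hFn hpθ,
      ← withDensity_mul _ (show Measurable fun xc : EuclideanSpace ℝ (Fin n) × C => pθ xc.1 from hpθ.comp measurable_fst) hpc, ← hprodn]
    rfl
  -- put everything together
  rw [hchain N le_rfl, hB, hν0, hprodm, s1, s2, s3, s4]
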